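/- For every finite game A of the tree form, the machine ⊤ has a winning strategy in the parallel disjunction ¬A ∨ A (the 'copy-cat' strategy: mimic in one component each move the environment makes in the other component). -/
import Mathlib


/- Finite games as rooted labeled trees: node label = player (`true` = ⊤
machine, `false` = ⊥ environment) who wins if the play ends at that position;
each edge (child) carries the player allowed to make that move. -/
inductive Game : Type where
  | node : Bool → List (Bool × Game) → Game

/-- Negation: swap ⊤ and ⊥ everywhere (in node labels and move prefixes). -/
def Game.neg : Game → Game
  | .node l cs => .node (!l) (cs.attach.map fun c => (!c.1.1, c.1.2.neg))
decreasing_by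
  obtain ⟨⟨b, g⟩, hmem⟩ := c
  have := List.sizeOf_lt_of_mem hmem
  simp at this ⊢
  omega

/-- Parallel disjunction `A ∨ B`: positions are pairs of positions; either
player may move in either component whenever it has a legal move there (so
moves of the two components are arbitrarily interleaved); if the play ends, ⊤
wins iff it wins in at least one component (disjunction of the labels). -/
def Game.por : Game → Game → Game
  | .node la ca, .node lb cb =>
      .node (la || lb)
        ((ca.attach.map fun c => (c.1.1, c.1.2.por (.node lb cb))) ++
         (cb.attach.map fun c => (c.1.1, (Game.node la ca).por c.1.2)))
termination_by A B => (sizeOf A, sizeOf B)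
decreasing_by
  · obtain ⟨⟨b, g⟩, hmem⟩ := c
    have := List.sizeOf_lt_of_mem hmem
    simp at this ⊢
    left; omega
  · obtain ⟨⟨b, g⟩, hmem⟩ := c
    have := List.sizeOf_lt_of_mem hmem
    simp at this ⊢
    right; omega

/-- `Wins A` : the machine ⊤ has a winning strategy in `A`.  At any position ⊤
may either make one of its own moves leading to a position it wins, or wait —
in which case the position's label must be ⊤ (in case the play ends there) and
⊤ must win after every possible environment move. -/
inductive Wins : Game → Prop where
  | move {l : Bool} {cs : List (Bool × Game)} (c : Bool × Game) :
      c ∈ cs → c.1 = true → Wins c.2 → Wins (.node l cs)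
  | wait {cs : List (Bool × Game)} :
      (∀ c ∈ cs, c.1 = false → Wins c.2) → Wins (.node true cs)

/-- for every finite game `A`, the machine has a winning strategy
in the parallel disjunction `¬A ∨ A` (the copy-cat strategy: mimic in one
component each move the environment makes in the other component). -/
lemma neg_def (l : Bool) (cs : List (Bool × Game)) :
    Game.neg (.node l cs) = .node (!l) (cs.map fun c => (!c.1, c.2.neg)) := by
  rw [Game.neg]
  simp [List.attach, List.attachWith, List.map_pmap]

lemma por_def (la lb : Bool) (ca cb : List (Bool × Game)) :
    Game.por (.node la ca) (.node lb cb) =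
      .node (la || lb)
        ((ca.map fun c => (c.1, c.2.por (.node lb cb))) ++
         (cb.map fun c => (c.1, (Game.node la ca).por c.2))) := by
  rw [Game.por]
  simp [List.attach, List.attachWith, List.map_pmap]

lemma key : ∀ n : ℕ, ∀ A : Game, sizeOf A < n → Wins (A.neg.por A) := by
  intro n
  induction n with
  | zero => intro A h; omega
  | succ n ih =>
    intro A hA
    obtain ⟨l, cs⟩ := A
    have hcopy : ∀ b g, (b, g) ∈ cs → Wins (g.neg.por g) := by
      intro b g hg
      apply ih
      have := List.sizeOf_lt_of_mem hg
      simp at hA this ⊢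
      omega
    rw [neg_def, por_def]
    have hl : (!l || l) = true := by cases l <;> rfl
    rw [hl]
    apply Wins.wait
    intro c hc hcf
    rcases List.mem_append.1 hc with h | h
    · -- env moved in the left (neg) component
      rw [List.map_map] at h
      obtain ⟨⟨b, g⟩, hg, rfl⟩ := List.mem_map.1 h
      simp at hcf
      subst hcf
      obtain ⟨lg, cg⟩ := g
      show Wins ((Game.node lg cg).neg.por (Game.node l cs))
      rw [neg_def, por_def]
      apply Wins.move (true, Game.por (Game.node (!lg) (cg.map fun c => (!c.1, c.2.neg))) (Game.node lg cg))
      · apply List.mem_append.2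
        right
        exact List.mem_map.2 ⟨(true, .node lg cg), hg, rfl⟩
      · rfl
      · have := hcopy _ _ hg
        rwa [neg_def] at this
    · -- env moved in the right component
      obtain ⟨⟨b, g⟩, hg, rfl⟩ := List.mem_map.1 h
      simp at hcf
      subst hcf
      obtain ⟨lg, cg⟩ := g
      show Wins ((Game.node (!l) (cs.map fun c => (!c.1, c.2.neg))).por (Game.node lg cg))
      rw [por_def]
      apply Wins.move (true, Game.por ((Game.node lg cg).neg) (Game.node lg cg))
      · apply List.mem_append.2
        left
        apply List.mem_map.2
        exact ⟨(true, (Game.node lg cg).neg), List.mem_map.2 ⟨(false, .node lg cg), hg, rfl⟩, rfl⟩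
      · rfl
      · exact hcopy _ _ hg

theorem wins_excluded_middle_parallel (A : Game) : Wins (A.neg.por A) :=
  key (sizeOf A + 1) A (by omega)
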